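/- For every integer s with 2 ≤ s ≤ M, the following identity holds: (s−1 + (1−p)/p)·E(s−1) − (s + (1−p)/p)·E(s) = −p · Σ_{i=1}^{M−s} U(i+s−1)(1−p)^{i−1}. -/

import Mathlib

open Finset

/-- Expected average reward `E(s)` of the threshold-`s` policy, for `1 ≤ s ≤ M`;
`E(M+1) = 0` corresponds to the always-inactive policy. -/
noncomputable def Ereward (M : ℕ) (p G P B : ℝ) (U : ℕ → ℝ) (s : ℕ) : ℝ :=
  if s = M + 1 then 0
  else ((s : ℝ) + (1 - p) / p)⁻¹ *
    ((∑ x ∈ Finset.Icc 1 (s - 1), U x)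
      + (∑ i ∈ Finset.range (M - s), U (s + i) * (1 - p) ^ i)
      - G / p - P + B)

/-- The identity
`(s−1+(1−p)/p)·E(s−1) − (s+(1−p)/p)·E(s) = −p Σ_{i=1}^{M−s} U(i+s−1)(1−p)^{i−1}`. -/
theorem reward_difference_identity (M s : ℕ) (p G P B : ℝ) (U : ℕ → ℝ)
    (hM : 2 ≤ M) (hp : 0 < p) (hp1 : p < 1)
    (hs : 2 ≤ s) (hsM : s ≤ M)
    (hU : ∀ ⦃x y : ℕ⦄, 1 ≤ x → x ≤ y → y ≤ M → U y ≤ U x)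
    (hUM : U M = 0) :
    ((s : ℝ) - 1 + (1 - p) / p) * Ereward M p G P B U (s - 1)
      - ((s : ℝ) + (1 - p) / p) * Ereward M p G P B U s
    = -p * ∑ i ∈ Finset.Icc 1 (M - s), U (i + s - 1) * (1 - p) ^ (i - 1) := by
  have hq : (0:ℝ) < (1 - p) / p := div_pos (by linarith) hp
  have hs1 : ((s - 1 : ℕ) : ℝ) = (s : ℝ) - 1 := by
    push_cast [Nat.cast_sub (by omega : 1 ≤ s)]; ring
  have hc1 : ((s:ℝ) - 1 + (1 - p) / p) ≠ 0 := by
    have : (2:ℝ) ≤ (s:ℝ) := by exact_mod_cast hs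
    nlinarith
  have hc2 : ((s:ℝ) + (1 - p) / p) ≠ 0 := by
    have : (2:ℝ) ≤ (s:ℝ) := by exact_mod_cast hs
    nlinarith
  rw [Ereward, Ereward, if_neg (by omega), if_neg (by omega), hs1,
    mul_inv_cancel_left₀ hc1, mul_inv_cancel_left₀ hc2]
  have hM1 : M - (s - 1) = (M - s) + 1 := by omega
  have hs2 : s - 1 = (s - 2) + 1 := by omega
  rw [hM1, hs2, Finset.sum_Icc_succ_top (by omega : 1 ≤ s - 2 + 1),
    Finset.sum_range_succ', ← hs2]
  have hR : ∑ i ∈ Finset.Icc 1 (M - s), U (i + s - 1) * (1 - p) ^ (i - 1)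
      = ∑ i ∈ Finset.range (M - s), U (s + i) * (1 - p) ^ i := by
    rw [← Finset.Ico_add_one_right_eq_Icc, Finset.sum_Ico_eq_sum_range]
    apply Finset.sum_congr rfl
    intro i _
    rw [show 1 + i + s - 1 = s + i by omega, show 1 + i - 1 = i by omega]
  rw [hR, show s - 1 - 1 = s - 2 by omega]
  have key : ∑ i ∈ Finset.range (M - s), U (s - 1 + (i + 1)) * (1 - p) ^ (i + 1)
      - ∑ i ∈ Finset.range (M - s), U (s + i) * (1 - p) ^ i
      = -p * ∑ i ∈ Finset.range (M - s), U (s + i) * (1 - p) ^ i := by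
    rw [Finset.mul_sum, ← Finset.sum_sub_distrib]
    apply Finset.sum_congr rfl
    intro i _
    rw [show s - 1 + (i + 1) = s + i by omega]
    ring
  simp only [pow_zero]
  linarith [key]
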